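/- Let L = [[L1, L2],[L2^T, L3]] be the Laplacian matrix of a connected graph, written in block form, with L1 nonsingular. Set S = L3 - L2^T L1^{-1} L2. Then the matrix X = [[L1^{-1} + L1^{-1} L2 S^# L2^T L1^{-1}, -L1^{-1} L2 S^#],[-S^# L2^T L1^{-1}, S^#]] is a symmetric {1}-inverse of L, i.e., X = X^T and L X L = L. -/

import Mathlib

open Matrix Kronecker

private lemma group_inv_unique {k : ℕ} (S A B : Matrix (Fin k) (Fin k) ℝ)
    (hA1 : S * A * S = S) (hA2 : A * S * A = A) (hA3 : S * A = A * S)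
    (hB1 : S * B * S = S) (hB2 : B * S * B = B) (hB3 : S * B = B * S) : A = B := by
  have e1 : S * A = S * B * S * A := by nth_rewrite 1 [← hB1]; rfl
  have e2 : S * B = S * B * S * A := by
    calc S * B = B * S := hB3
      _ = B * (S * A * S) := by rw [hA1]
      _ = B * (S * (S * A)) := by rw [Matrix.mul_assoc S A S, ← hA3]
      _ = B * S * (S * A) := by rw [Matrix.mul_assoc]
      _ = S * B * (S * A) := by rw [hB3]
      _ = S * B * S * A := by rw [Matrix.mul_assoc (S * B) S A]
  have hE : S * A = S * B := by rw [e1, ← e2]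
  calc A = A * S * A := hA2.symm
    _ = A * (S * A) := by rw [Matrix.mul_assoc]
    _ = A * (S * B) := by rw [hE]
    _ = A * S * B := by rw [Matrix.mul_assoc]
    _ = S * A * B := by rw [← hA3]
    _ = S * B * B := by rw [hE]
    _ = B * S * B := by rw [hB3]
    _ = B := hB2

/-- If the Laplacian of a connected graph is partitioned as `[[L1, L2], [L2ᵀ, L3]]` with
`L1` nonsingular, and `S = L3 - L2ᵀ L1⁻¹ L2` with group inverse `Sh`, then the displayed
block matrix `X` is a symmetric `{1}`-inverse of the Laplacian. -/
theorem lap_symmetric_one_inverse_blocks {m k : ℕ}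
    (G : SimpleGraph (Fin m ⊕ Fin k)) [DecidableRel G.Adj] (hconn : G.Connected)
    (L1 : Matrix (Fin m) (Fin m) ℝ) (L2 : Matrix (Fin m) (Fin k) ℝ)
    (L3 : Matrix (Fin k) (Fin k) ℝ)
    (hL : G.lapMatrix ℝ = Matrix.fromBlocks L1 L2 L2ᵀ L3)
    (hL1 : IsUnit L1.det)
    (S Sh : Matrix (Fin k) (Fin k) ℝ)
    (hS : S = L3 - L2ᵀ * L1⁻¹ * L2)
    (hSh : S * Sh * S = S ∧ Sh * S * Sh = Sh ∧ S * Sh = Sh * S)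
    (X : Matrix (Fin m ⊕ Fin k) (Fin m ⊕ Fin k) ℝ)
    (hX : X = Matrix.fromBlocks
      (L1⁻¹ + L1⁻¹ * L2 * Sh * L2ᵀ * L1⁻¹) (-(L1⁻¹ * L2 * Sh))
      (-(Sh * L2ᵀ * L1⁻¹)) Sh) :
    Xᵀ = X ∧ G.lapMatrix ℝ * X * G.lapMatrix ℝ = G.lapMatrix ℝ := by
  obtain ⟨hSh1, hSh2, hSh3⟩ := hSh
  have hsymm : (Matrix.fromBlocks L1 L2 L2ᵀ L3)ᵀ = Matrix.fromBlocks L1 L2 L2ᵀ L3 := by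
    rw [← hL]; exact (SimpleGraph.isSymm_lapMatrix (R := ℝ) G)
  rw [Matrix.fromBlocks_transpose] at hsymm
  have hL1s : L1ᵀ = L1 := by
    have := congrArg Matrix.toBlocks₁₁ hsymm
    simpa [Matrix.toBlocks_fromBlocks₁₁] using this
  have hL3s : L3ᵀ = L3 := by
    have := congrArg Matrix.toBlocks₂₂ hsymm
    simpa [Matrix.toBlocks_fromBlocks₂₂] using this
  have hL1is : L1⁻¹ᵀ = L1⁻¹ := by rw [Matrix.transpose_nonsing_inv, hL1s]
  have hSs : Sᵀ = S := by
    rw [hS]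
    simp [Matrix.transpose_sub, Matrix.transpose_mul, hL1is, hL3s, Matrix.mul_assoc]
  have hShs : Shᵀ = Sh := by
    refine group_inv_unique S Shᵀ Sh ?_ ?_ ?_ hSh1 hSh2 hSh3
    · calc S * Shᵀ * S = (S * Sh * S)ᵀ := by
            simp [Matrix.transpose_mul, hSs, Matrix.mul_assoc]
        _ = S := by rw [hSh1, hSs]
    · calc Shᵀ * S * Shᵀ = (Sh * S * Sh)ᵀ := by
            simp [Matrix.transpose_mul, hSs, Matrix.mul_assoc]
        _ = Shᵀ := by rw [hSh2]
    · calc S * Shᵀ = (Sh * S)ᵀ := by simp [Matrix.transpose_mul, hSs]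
        _ = (S * Sh)ᵀ := by rw [← hSh3]
        _ = Shᵀ * S := by simp [Matrix.transpose_mul, hSs]
  have h1 : L1⁻¹ * L1 = 1 := Matrix.nonsing_inv_mul L1 hL1
  have h2 : L1 * L1⁻¹ = 1 := Matrix.mul_nonsing_inv L1 hL1
  constructor
  · rw [hX, Matrix.fromBlocks_transpose, Matrix.fromBlocks_inj]
    refine ⟨?_, ?_, ?_, hShs⟩
    · simp [Matrix.transpose_add, Matrix.transpose_mul, hL1is, hShs, Matrix.mul_assoc]
    · simp [Matrix.transpose_neg, Matrix.transpose_mul, hL1is, hShs, Matrix.mul_assoc]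
    · simp [Matrix.transpose_neg, Matrix.transpose_mul, hL1is, hShs, Matrix.mul_assoc]
  · rw [hL, hX, Matrix.fromBlocks_multiply, Matrix.fromBlocks_multiply,
      Matrix.fromBlocks_inj]
    have hA : L1 * (L1⁻¹ + L1⁻¹ * L2 * Sh * L2ᵀ * L1⁻¹) + L2 * -(Sh * L2ᵀ * L1⁻¹) = 1 := by
      rw [Matrix.mul_add, Matrix.mul_neg]
      simp only [← Matrix.mul_assoc]
      rw [h2]
      simp only [Matrix.one_mul]
      abel
    have hB : L1 * -(L1⁻¹ * L2 * Sh) + L2 * Sh = 0 := by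
      rw [Matrix.mul_neg]
      simp only [← Matrix.mul_assoc]
      rw [h2]
      simp only [Matrix.one_mul]
      abel
    have hC : L2ᵀ * (L1⁻¹ + L1⁻¹ * L2 * Sh * L2ᵀ * L1⁻¹) + L3 * -(Sh * L2ᵀ * L1⁻¹)
        = L2ᵀ * L1⁻¹ - S * Sh * L2ᵀ * L1⁻¹ := by
      rw [hS, Matrix.mul_add, Matrix.mul_neg, Matrix.sub_mul, Matrix.sub_mul,
        Matrix.sub_mul]
      simp only [← Matrix.mul_assoc]
      abel
    have hD : L2ᵀ * -(L1⁻¹ * L2 * Sh) + L3 * Sh = S * Sh := by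
      rw [hS, Matrix.mul_neg, Matrix.sub_mul]
      simp only [← Matrix.mul_assoc]
      abel
    rw [hA, hB, hC, hD]
    refine ⟨by simp, by simp, ?_, ?_⟩
    · rw [Matrix.sub_mul]
      simp only [Matrix.mul_assoc]
      rw [h1]
      simp only [Matrix.mul_one]
      simp only [← Matrix.mul_assoc]
      abel
    · rw [Matrix.sub_mul]
      have expand : S * Sh * L3 - S * Sh * (L2ᵀ * L1⁻¹ * L2) = S := by
        rw [← Matrix.mul_sub, ← hS]
        rw [show S * Sh * S = S from hSh1]
      have assoc : S * Sh * L2ᵀ * L1⁻¹ * L2 = S * Sh * (L2ᵀ * L1⁻¹ * L2) := by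
        simp only [Matrix.mul_assoc]
      rw [assoc]
      calc L2ᵀ * L1⁻¹ * L2 - S * Sh * (L2ᵀ * L1⁻¹ * L2) + S * Sh * L3
          = L2ᵀ * L1⁻¹ * L2 + (S * Sh * L3 - S * Sh * (L2ᵀ * L1⁻¹ * L2)) := by abel
        _ = L2ᵀ * L1⁻¹ * L2 + S := by rw [expand]
        _ = L3 := by rw [hS]; abel
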